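/- For every k, d ≥ 1, sup_{p ∈ (0,1)} min_{t ∈ {1,…,k}} C_∅(p,t)/(d·t) = ( sup_{p ∈ (0,1)} C_∅(p,k) )/(d·k); in particular, for every p ∈ (0,1) the minimum over t ∈ {1,…,k} of C_∅(p,t)/t equals C_∅(p,k)/k. -/

import Mathlib

open Finset
open scoped Classical

noncomputable section

/-- The Bernoulli probability mass function on `Bool` with parameter `p`. -/
def bern (p : ℝ) (b : Bool) : ℝ := if b then p else 1 - p

/-- The binary OR of a finite family of bits. -/
def orB {t : ℕ} (x : Fin t → Bool) : Bool := decide (∃ i, x i = true)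

/-- The output marginal pmf: `P_Y(y) = Σ_x (∏_i Bern(p)(x_i)) · W(y | OR(x))`. -/
def outP {Y : Type} [Fintype Y] (W : Y → Bool → ℝ) (p : ℝ) (t : ℕ) (y : Y) : ℝ :=
  ∑ x : Fin t → Bool, (∏ i, bern p (x i)) * W y (orB x)

/-- `C_∅(p,t) = I(X_1,…,X_t ; Y)`: the mutual information (natural logarithm) where
`X_1,…,X_t` are i.i.d. Bernoulli(`p`), `Z` is their binary OR, and `Y ∼ W(·|Z)` with
`W = P^{f(p)}`; computed as the expectation of the information density
`log(W(y|OR(x)) / P_Y(y))` under the joint law. -/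
def Cempty {Y : Type} [Fintype Y] (W : Y → Bool → ℝ) (p : ℝ) (t : ℕ) : ℝ :=
  ∑ x : Fin t → Bool, ∑ y : Y,
    ((∏ i, bern p (x i)) * W y (orB x)) * Real.log (W y (orB x) / outP W p t y)

/- ### Auxiliary development -/

lemma gibbs {Y : Type} [Fintype Y] (a b : Y → ℝ) (ha : ∀ y, 0 ≤ a y)
    (hb : ∀ y, 0 ≤ b y) (hab : ∀ y, 0 < a y → 0 < b y)
    (hsum : ∑ y, b y ≤ ∑ y, a y) :
    0 ≤ ∑ y, a y * Real.log (a y / b y) := by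
  have h : ∀ y, a y - b y ≤ a y * Real.log (a y / b y) := by
    intro y
    rcases eq_or_lt_of_le (ha y) with h0 | h0
    · rw [← h0]; simpa using hb y
    · have hby := hab y h0
      have h1 : Real.log (b y / a y) ≤ b y / a y - 1 :=
        Real.log_le_sub_one_of_pos (div_pos hby h0)
      have h2 : Real.log (a y / b y) = - Real.log (b y / a y) := by
        rw [← Real.log_inv]; congr 1; field_simp
      have h3 : a y * (b y / a y) = b y := by field_simp
      nlinarith
  calc (0:ℝ) ≤ ∑ y, (a y - b y) := by
        rw [Finset.sum_sub_distrib]; linarith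
    _ ≤ _ := Finset.sum_le_sum (fun y _ => h y)

lemma sum_orB (p : ℝ) (t : ℕ) (F : Bool → ℝ) :
    ∑ x : Fin t → Bool, (∏ i, bern p (x i)) * F (orB x)
      = (1-p)^t * F false + (1 - (1-p)^t) * F true := by
  classical
  have hS : ∑ x : Fin t → Bool, (∏ i, bern p (x i)) = 1 := by
    rw [show (univ : Finset (Fin t → Bool)) = Fintype.piFinset (fun _ => univ) from
      (Fintype.piFinset_univ).symm, ← Finset.prod_univ_sum]
    simp [bern]
  have hc0 : (∏ i, bern p ((fun _ : Fin t => false) i)) = (1-p)^t := by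
    simp [bern]
  have key : orB (fun _ : Fin t => false) = false := by simp [orB]
  rw [← Finset.add_sum_erase _ _ (Finset.mem_univ (fun _ : Fin t => false))]
  have h2 : ∀ x ∈ univ.erase (fun _ : Fin t => false),
      (∏ i, bern p (x i)) * F (orB x) = (∏ i, bern p (x i)) * F true := by
    intro x hx
    have hx' : x ≠ fun _ => false := (Finset.mem_erase.mp hx).1
    have hor : orB x = true := by
      simp only [orB, decide_eq_true_eq]
      by_contra h
      push_neg at h
      exact hx' (funext fun i => by simpa using h i)
    rw [hor]
  rw [Finset.sum_congr rfl h2, ← Finset.sum_mul, key, hc0]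
  have h3 : ∑ x ∈ univ.erase (fun _ : Fin t => false), ∏ i, bern p (x i)
      = 1 - (1-p)^t := by
    have h4 := Finset.add_sum_erase univ (fun x : Fin t → Bool => ∏ i, bern p (x i))
      (Finset.mem_univ (fun _ : Fin t => false))
    simp only [hS] at h4
    simp only [hc0] at h4
    linarith
  rw [h3]

/-- The output marginal as a function of the OR-probability. -/
def mA {Y : Type} [Fintype Y] (W : Y → Bool → ℝ) (q : ℝ) (y : Y) : ℝ :=
  q * W y true + (1-q) * W y false

def DD {Y : Type} [Fintype Y] (W : Y → Bool → ℝ) (q : ℝ) (z : Bool) : ℝ :=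
  ∑ y, W y z * Real.log (W y z / mA W q y)

/-- Mutual information of a `Bernoulli(q)` input through channel `W`. -/
def gI {Y : Type} [Fintype Y] (W : Y → Bool → ℝ) (q : ℝ) : ℝ :=
  q * DD W q true + (1-q) * DD W q false

lemma outP_eq {Y : Type} [Fintype Y] (W : Y → Bool → ℝ) (p : ℝ) (t : ℕ) (y : Y) :
    outP W p t y = mA W (1 - (1-p)^t) y := by
  unfold outP mA
  rw [sum_orB p t (fun z => W y z)]
  ring

lemma Cempty_eq {Y : Type} [Fintype Y] (W : Y → Bool → ℝ) (p : ℝ) (t : ℕ) :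
    Cempty W p t = gI W (1 - (1-p)^t) := by
  unfold Cempty
  have h : ∀ (x : Fin t → Bool) (y : Y),
      ((∏ i, bern p (x i)) * W y (orB x)) * Real.log (W y (orB x) / outP W p t y)
      = (∏ i, bern p (x i)) * (W y (orB x) * Real.log (W y (orB x) / mA W (1-(1-p)^t) y)) := by
    intro x y; rw [outP_eq]; ring
  simp_rw [h, ← Finset.mul_sum]
  rw [sum_orB p t (fun z => ∑ y, W y z * Real.log (W y z / mA W (1-(1-p)^t) y))]
  unfold gI DD
  ring

section W
variable {Y : Type} [Fintype Y] (W : Y → Bool → ℝ)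
variable (hW0 : ∀ y z, 0 ≤ W y z) (hW1 : ∀ z, ∑ y : Y, W y z = 1)

include hW0 in
lemma mA_nonneg {q : ℝ} (h0 : 0 ≤ q) (h1 : q ≤ 1) (y : Y) : 0 ≤ mA W q y := by
  unfold mA
  have := hW0 y true; have := hW0 y false
  nlinarith

include hW1 in
lemma mA_sum (q : ℝ) : ∑ y, mA W q y = 1 := by
  unfold mA
  rw [Finset.sum_add_distrib, ← Finset.mul_sum, ← Finset.mul_sum, hW1, hW1]
  ring

include hW0 in
lemma mA_pos_true {q : ℝ} (h0 : 0 < q) (h1 : q ≤ 1) {y : Y} (hy : 0 < W y true) :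
    0 < mA W q y := by
  unfold mA
  have := hW0 y false
  nlinarith

include hW0 in
lemma mA_pos_false {q : ℝ} (h0 : 0 ≤ q) (h1 : q < 1) {y : Y} (hy : 0 < W y false) :
    0 < mA W q y := by
  unfold mA
  have := hW0 y true
  nlinarith

include hW0 hW1 in
lemma DD_nonneg {q : ℝ} (h0 : 0 ≤ q) (h1 : q ≤ 1) (z : Bool) :
    (0 < q ∨ z = false) → (q < 1 ∨ z = true) → 0 ≤ DD W q z := by
  intro hA hB
  refine gibbs (fun y => W y z) (mA W q) (fun y => hW0 y z)
    (fun y => mA_nonneg W hW0 h0 h1 y) ?_ (by rw [mA_sum W hW1, hW1])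
  intro y hy
  cases z with
  | true =>
    rcases hA with h | h
    · exact mA_pos_true W hW0 h h1 hy
    · simp at h
  | false =>
    rcases hB with h | h
    · exact mA_pos_false W hW0 h0 h hy
    · simp at h

include hW0 hW1 in
lemma gI_nonneg {q : ℝ} (h0 : 0 < q) (h1 : q < 1) : 0 ≤ gI W q := by
  unfold gI
  have h2 := DD_nonneg W hW0 hW1 h0.le h1.le true (Or.inl h0) (Or.inr rfl)
  have h3 := DD_nonneg W hW0 hW1 h0.le h1.le false (Or.inr rfl) (Or.inl h1)
  nlinarith

lemma gI_eq_sum (q : ℝ) : gI W q = ∑ y,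
    (q * (W y true * Real.log (W y true / mA W q y))
      + (1-q) * (W y false * Real.log (W y false / mA W q y))) := by
  unfold gI DD
  rw [Finset.mul_sum, Finset.mul_sum, ← Finset.sum_add_distrib]

lemma hsplit {w m m' : ℝ} (hw : 0 ≤ w) (hm : 0 < w → 0 < m) (hm' : 0 < w → 0 < m') :
    w * Real.log (w/m) = w * Real.log (w/m') + w * Real.log (m'/m) := by
  rcases eq_or_lt_of_le hw with h | h
  · rw [← h]; ring
  · have h1 := hm h; have h2 := hm' h
    rw [Real.log_div h.ne' h1.ne', Real.log_div h.ne' h2.ne', Real.log_div h2.ne' h1.ne']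
    ring

include hW0 in
lemma gI_decomp (lam q' : ℝ) (hl0 : 0 < lam) (hl1 : lam ≤ 1)
    (hq'0 : 0 < q') (hq'1 : q' < 1) :
    gI W (lam * q') = lam * gI W q'
      + lam * (∑ y, mA W q' y * Real.log (mA W q' y / mA W (lam * q') y))
      + (1-lam) * (∑ y, W y false * Real.log (W y false / mA W (lam * q') y)) := by
  have hq0 : 0 < lam * q' := mul_pos hl0 hq'0
  have hq1 : lam * q' < 1 := lt_of_le_of_lt (by nlinarith) hq'1
  rw [gI_eq_sum, gI_eq_sum, Finset.mul_sum, Finset.mul_sum, Finset.mul_sum,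
    ← Finset.sum_add_distrib, ← Finset.sum_add_distrib]
  refine Finset.sum_congr rfl (fun y _ => ?_)
  have h1 : W y true * Real.log (W y true / mA W (lam*q') y)
      = W y true * Real.log (W y true / mA W q' y)
        + W y true * Real.log (mA W q' y / mA W (lam*q') y) :=
    hsplit (hW0 y true) (fun h => mA_pos_true W hW0 hq0 hq1.le h)
      (fun h => mA_pos_true W hW0 hq'0 hq'1.le h)
  have h0 : W y false * Real.log (W y false / mA W (lam*q') y)
      = W y false * Real.log (W y false / mA W q' y)
        + W y false * Real.log (mA W q' y / mA W (lam*q') y) :=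
    hsplit (hW0 y false) (fun h => mA_pos_false W hW0 hq0.le hq1 h)
      (fun h => mA_pos_false W hW0 hq'0.le hq'1 h)
  rw [h1, h0]
  simp only [mA]
  ring

include hW0 hW1 in
lemma gI_key (lam q' : ℝ) (hl0 : 0 < lam) (hl1 : lam ≤ 1)
    (hq'0 : 0 < q') (hq'1 : q' < 1) :
    lam * gI W q' ≤ gI W (lam * q') := by
  have hq0 : 0 < lam * q' := mul_pos hl0 hq'0
  have hq1 : lam * q' < 1 := lt_of_le_of_lt (by nlinarith) hq'1
  rw [gI_decomp W hW0 lam q' hl0 hl1 hq'0 hq'1]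
  have g1 : 0 ≤ ∑ y, mA W q' y * Real.log (mA W q' y / mA W (lam*q') y) := by
    refine gibbs _ _ (fun y => mA_nonneg W hW0 hq'0.le hq'1.le y)
      (fun y => mA_nonneg W hW0 hq0.le hq1.le y) ?_
      (by rw [mA_sum W hW1, mA_sum W hW1])
    intro y hy
    rcases lt_or_ge 0 (W y false) with h | h
    · exact mA_pos_false W hW0 hq0.le hq1 h
    · have hf : W y false = 0 := le_antisymm h (hW0 y false)
      have ht : 0 < W y true := by
        by_contra hc
        push_neg at hc
        have : W y true = 0 := le_antisymm hc (hW0 y true)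
        simp [mA, hf, this] at hy
      exact mA_pos_true W hW0 hq0 hq1.le ht
  have g2 : 0 ≤ ∑ y, W y false * Real.log (W y false / mA W (lam*q') y) :=
    DD_nonneg W hW0 hW1 hq0.le hq1.le false (Or.inr rfl) (Or.inl hq1)
  nlinarith
end W

lemma geom_ineq {r : ℝ} (hr0 : 0 ≤ r) (hr1 : r ≤ 1) {t k : ℕ} (htk : t ≤ k) :
    (t:ℝ) * (1 - r^k) ≤ (k:ℝ) * (1 - r^t) := by
  have e : ∀ n : ℕ, 1 - r^n = (∑ i ∈ range n, r^i) * (1-r) := by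
    intro n; linear_combination geom_sum_mul r n
  rw [e k, e t]
  have hsplit : ∑ i ∈ range k, r^i = ∑ i ∈ range t, r^i + ∑ i ∈ Ico t k, r^i := by
    rw [Finset.range_eq_Ico,
      ← Finset.sum_Ico_consecutive _ (Nat.zero_le t) htk, Finset.range_eq_Ico]
  have hSt : (t:ℝ) * r^t ≤ ∑ i ∈ range t, r^i := by
    calc (t:ℝ) * r^t = ∑ _i ∈ range t, r^t := by
          rw [Finset.sum_const, Finset.card_range, nsmul_eq_mul]
      _ ≤ _ := Finset.sum_le_sum fun i hi =>
          pow_le_pow_of_le_one hr0 hr1 (le_of_lt (Finset.mem_range.mp hi))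
  have hT : ∑ i ∈ Ico t k, r^i ≤ ((k:ℝ) - t) * r^t := by
    calc ∑ i ∈ Ico t k, r^i ≤ ∑ _i ∈ Ico t k, r^t :=
          Finset.sum_le_sum fun i hi =>
            pow_le_pow_of_le_one hr0 hr1 (Finset.mem_Ico.mp hi).1
      _ = ((k:ℝ) - t) * r^t := by
          rw [Finset.sum_const, Nat.card_Ico, nsmul_eq_mul, Nat.cast_sub htk]
  have hrt : 0 ≤ r^t := pow_nonneg hr0 t
  have htk' : (t:ℝ) ≤ k := Nat.cast_le.mpr htk
  have ht0 : (0:ℝ) ≤ t := Nat.cast_nonneg t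
  have h1r : 0 ≤ 1 - r := by linarith
  rw [hsplit]
  have b1 : (t:ℝ) * ∑ i ∈ Ico t k, r^i ≤ (t:ℝ) * (((k:ℝ) - t) * r^t) :=
    mul_le_mul_of_nonneg_left hT ht0
  have b2 : ((k:ℝ) - t) * ((t:ℝ) * r^t) ≤ ((k:ℝ) - t) * ∑ i ∈ range t, r^i :=
    mul_le_mul_of_nonneg_left hSt (by linarith)
  nlinarith [Finset.sum_nonneg (fun i (_ : i ∈ range t) => pow_nonneg hr0 i)]

/-- The key pointwise inequality: `t · C_∅(p,k) ≤ k · C_∅(p,t)` for `1 ≤ t ≤ k`. -/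
lemma main_ineq {Y : Type} [Fintype Y] (W : Y → Bool → ℝ)
    (hW0 : ∀ y z, 0 ≤ W y z) (hW1 : ∀ z, ∑ y : Y, W y z = 1)
    {p : ℝ} (hp : p ∈ Set.Ioo (0:ℝ) 1) {t k : ℕ} (ht : 1 ≤ t) (htk : t ≤ k) :
    (t:ℝ) * Cempty W p k ≤ (k:ℝ) * Cempty W p t := by
  obtain ⟨hp0, hp1⟩ := hp
  set r : ℝ := 1 - p with hr
  have hr0 : 0 < r := by simp [hr]; linarith
  have hr1 : r < 1 := by simp [hr]; linarith
  have hk : 1 ≤ k := le_trans ht htk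
  rw [Cempty_eq, Cempty_eq]
  set qt : ℝ := 1 - r^t with hqt
  set qk : ℝ := 1 - r^k with hqk
  have hqt0 : 0 < qt := by
    have : r^t < 1 := pow_lt_one₀ hr0.le hr1 (by omega)
    simp [hqt]; linarith
  have hqk0 : 0 < qk := by
    have : r^k < 1 := pow_lt_one₀ hr0.le hr1 (by omega)
    simp [hqk]; linarith
  have hqk1 : qk < 1 := by
    have : 0 < r^k := pow_pos hr0 k
    simp [hqk]; linarith
  have hqtk : qt ≤ qk := by
    have : r^k ≤ r^t := pow_le_pow_of_le_one hr0.le hr1.le htk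
    simp [hqt, hqk]; linarith
  have hqt1 : qt < 1 := lt_of_le_of_lt hqtk hqk1
  set lam : ℝ := qt / qk with hlam
  have hl0 : 0 < lam := div_pos hqt0 hqk0
  have hl1 : lam ≤ 1 := by
    rw [hlam, div_le_one hqk0]; exact hqtk
  have hmul : lam * qk = qt := div_mul_cancel₀ qt hqk0.ne'
  have hkey : lam * gI W qk ≤ gI W qt := by
    have := gI_key W hW0 hW1 lam qk hl0 hl1 hqk0 hqk1
    rwa [hmul] at this
  have hg0 : 0 ≤ gI W qk := gI_nonneg W hW0 hW1 hqk0 hqk1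
  have hgeom : (t:ℝ) * qk ≤ (k:ℝ) * qt := geom_ineq hr0.le hr1.le htk
  -- from k*qt ≥ t*qk : k*lam ≥ t
  have hklam : (t:ℝ) ≤ (k:ℝ) * lam := by
    rw [hlam, ← mul_div_assoc, le_div_iff₀ hqk0]
    linarith
  have hk0 : (0:ℝ) ≤ k := Nat.cast_nonneg k
  calc (t:ℝ) * gI W qk ≤ ((k:ℝ) * lam) * gI W qk := by nlinarith
    _ = (k:ℝ) * (lam * gI W qk) := by ring
    _ ≤ (k:ℝ) * gI W qt := by nlinarith

lemma sSup_image_div (S : Set ℝ) (c : ℝ) (hc : 0 < c) :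
    sSup ((fun x => x / c) '' S) = sSup S / c := by
  rcases S.eq_empty_or_nonempty with h | h
  · simp [h, Real.sSup_empty]
  · by_cases hb : BddAbove S
    · obtain ⟨M, hM⟩ := hb
      have hb' : BddAbove ((fun x => x / c) '' S) := by
        refine ⟨M / c, ?_⟩
        rintro y ⟨x, hx, rfl⟩
        exact div_le_div_of_nonneg_right (hM hx) hc.le
      apply le_antisymm
      · apply csSup_le (h.image _)
        rintro y ⟨x, hx, rfl⟩
        exact div_le_div_of_nonneg_right (le_csSup ⟨M, hM⟩ hx) hc.le
      · rw [div_le_iff₀ hc]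
        apply csSup_le h
        intro x hx
        have : x / c ≤ sSup ((fun x => x / c) '' S) :=
          le_csSup hb' ⟨x, hx, rfl⟩
        rwa [div_le_iff₀ hc] at this
    · have hb' : ¬ BddAbove ((fun x => x / c) '' S) := by
        intro ⟨M, hM⟩
        apply hb
        refine ⟨M * c, fun x hx => ?_⟩
        have : x / c ≤ M := hM ⟨x, hx, rfl⟩
        rwa [div_le_iff₀ hc] at this
      rw [Real.sSup_of_not_bddAbove hb, Real.sSup_of_not_bddAbove hb']
      simp

lemma inf'_min {Y : Type} [Fintype Y] (W : Y → Bool → ℝ)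
    (hW0 : ∀ y z, 0 ≤ W y z) (hW1 : ∀ z, ∑ y : Y, W y z = 1)
    {p : ℝ} (hp : p ∈ Set.Ioo (0:ℝ) 1) {k : ℕ} (hk : 1 ≤ k) (c : ℝ) (hc : 0 < c)
    (hne : (Finset.Icc 1 k).Nonempty) :
    (Finset.Icc 1 k).inf' hne (fun t => Cempty W p t / (c * t)) = Cempty W p k / (c * k) := by
  apply le_antisymm
  · exact Finset.inf'_le _ (Finset.mem_Icc.mpr ⟨hk, le_rfl⟩)
  · apply Finset.le_inf'
    intro t htmem
    obtain ⟨ht1, htk⟩ := Finset.mem_Icc.mp htmem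
    have ht0 : (0:ℝ) < t := by exact_mod_cast Nat.lt_of_lt_of_le Nat.zero_lt_one ht1
    have hk0 : (0:ℝ) < k := by exact_mod_cast Nat.lt_of_lt_of_le Nat.zero_lt_one hk
    rw [div_le_div_iff₀ (by positivity) (by positivity)]
    have hmain := main_ineq W hW0 hW1 hp ht1 htk
    nlinarith

theorem statement5 (Y : Type) [Fintype Y] (f : ℝ → ℝ) (P : ℝ → Y → Bool → ℝ)
    (hP0 : ∀ q y z, 0 ≤ P q y z) (hP1 : ∀ q z, ∑ y : Y, P q y z = 1)
    (d k : ℕ) (hd : 1 ≤ d) (hk : 1 ≤ k) :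
    sSup ((fun p : ℝ => (Finset.Icc 1 k).inf' ⟨1, Finset.mem_Icc.mpr ⟨le_rfl, hk⟩⟩
          (fun t => Cempty (P (f p)) p t / ((d : ℝ) * t))) '' Set.Ioo 0 1) =
      sSup ((fun p : ℝ => Cempty (P (f p)) p k) '' Set.Ioo 0 1) / ((d : ℝ) * k) ∧
    ∀ p ∈ Set.Ioo (0 : ℝ) 1,
      (Finset.Icc 1 k).inf' ⟨1, Finset.mem_Icc.mpr ⟨le_rfl, hk⟩⟩
          (fun t => Cempty (P (f p)) p t / (t : ℝ)) =
        Cempty (P (f p)) p k / (k : ℝ) := by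
  have hd0 : (0:ℝ) < d := by exact_mod_cast Nat.lt_of_lt_of_le Nat.zero_lt_one hd
  have hk0 : (0:ℝ) < k := by exact_mod_cast Nat.lt_of_lt_of_le Nat.zero_lt_one hk
  constructor
  · have himg : (fun p : ℝ => (Finset.Icc 1 k).inf' ⟨1, Finset.mem_Icc.mpr ⟨le_rfl, hk⟩⟩
          (fun t => Cempty (P (f p)) p t / ((d : ℝ) * t))) '' Set.Ioo 0 1
        = ((fun x => x / ((d:ℝ) * k)) ∘ (fun p : ℝ => Cempty (P (f p)) p k)) '' Set.Ioo 0 1 := by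
      apply Set.image_congr
      intro p hp
      exact inf'_min (P (f p)) (hP0 (f p)) (hP1 (f p)) hp hk (d:ℝ) hd0 _
    rw [himg, Set.image_comp, sSup_image_div _ _ (by positivity)]
  · intro p hp
    have h := inf'_min (P (f p)) (hP0 (f p)) (hP1 (f p)) hp hk 1 one_pos
      ⟨1, Finset.mem_Icc.mpr ⟨le_rfl, hk⟩⟩
    simp only [one_mul] at h
    exact h
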